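/- Let d be a positive squarefree integer and let a, b, c be integers with gcd(a, b, c) = 1. Set d₀ = gcd(a, b·d, c). If p is an odd prime such that p·d₀² divides d·(b²·d − a·c), then p does not divide d₀. -/

import Mathlib

/-- For `d` positive squarefree, `gcd(a,b,c) = 1`, `d₀ = gcd(a, bd, c)`, and `p` an odd prime
with `p·d₀² ∣ d·(b²d - ac)`, we have `p ∤ d₀`. -/
theorem odd_prime_not_dvd_d0 (d : ℤ) (hd : 0 < d) (hsq : Squarefree d)
    (a b c : ℤ) (habc : Int.gcd (Int.gcd a b) c = 1)
    (p : ℕ) (hp : p.Prime) (hodd : Odd p)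
    (hdvd : (p : ℤ) * (Int.gcd (Int.gcd a (b * d)) c : ℤ) ^ 2 ∣ d * (b ^ 2 * d - a * c)) :
    ¬ (p : ℤ) ∣ (Int.gcd (Int.gcd a (b * d)) c : ℤ) := by
  intro hpd
  have hpprime : Prime (p : ℤ) := (by exact_mod_cast Nat.prime_iff_prime_int.mp hp)
  set d0 : ℤ := (Int.gcd (Int.gcd a (b * d)) c : ℤ) with hd0
  have hpa : (p : ℤ) ∣ a :=
    hpd.trans ((Int.gcd_dvd_left _ _).trans (Int.gcd_dvd_left _ _))
  have hpbd : (p : ℤ) ∣ b * d :=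
    hpd.trans ((Int.gcd_dvd_left _ _).trans (Int.gcd_dvd_right _ _))
  have hpc : (p : ℤ) ∣ c := hpd.trans (Int.gcd_dvd_right _ _)
  have hpb : ¬ (p : ℤ) ∣ b := by
    intro hb
    have h1 : (p : ℤ) ∣ (Int.gcd a b : ℤ) := Int.dvd_coe_gcd hpa hb
    have h2 : (p : ℤ) ∣ (Int.gcd (Int.gcd a b) c : ℤ) := Int.dvd_coe_gcd h1 hpc
    rw [habc] at h2
    have : (p : ℤ) ∣ 1 := by exact_mod_cast h2
    exact hp.one_lt.ne' (by exact_mod_cast Int.eq_one_of_dvd_one (by norm_num) this)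
  have hpdd : (p : ℤ) ∣ d := (hpprime.dvd_mul.mp hpbd).resolve_left hpb
  -- p^3 divides b^2 d^2
  have h3 : (p : ℤ) ^ 3 ∣ (p : ℤ) * d0 ^ 2 := by
    have : (p : ℤ) ^ 2 ∣ d0 ^ 2 := pow_dvd_pow_of_dvd hpd 2
    calc (p : ℤ) ^ 3 = (p : ℤ) * (p : ℤ) ^ 2 := by ring
    _ ∣ (p : ℤ) * d0 ^ 2 := mul_dvd_mul_left _ this
  have hacd : (p : ℤ) ^ 3 ∣ a * c * d := by
    have := mul_dvd_mul (mul_dvd_mul hpa hpc) hpdd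
    calc (p : ℤ) ^ 3 = (p : ℤ) * (p : ℤ) * (p : ℤ) := by ring
    _ ∣ a * c * d := this
  have hb2d2 : (p : ℤ) ^ 3 ∣ b ^ 2 * d ^ 2 := by
    have h4 : (p : ℤ) ^ 3 ∣ d * (b ^ 2 * d - a * c) := h3.trans hdvd
    have : b ^ 2 * d ^ 2 = d * (b ^ 2 * d - a * c) + a * c * d := by ring
    rw [this]
    exact dvd_add h4 hacd
  have hd2 : (p : ℤ) ^ 3 ∣ d ^ 2 := by
    have hnb2 : ¬ (p : ℤ) ∣ b ^ 2 := fun h => hpb (hpprime.dvd_of_dvd_pow h)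
    exact (Prime.pow_dvd_of_dvd_mul_left hpprime 3 hnb2) hb2d2
  -- derive p^2 ∣ d, contradiction with squarefree
  obtain ⟨e, he⟩ := hpdd
  have hpe : (p : ℤ) ∣ e := by
    have : (p : ℤ) ^ 3 ∣ (p : ℤ) ^ 2 * e ^ 2 := by
      rw [he] at hd2; convert hd2 using 1; ring
    have h5 : (p : ℤ) ∣ e ^ 2 := by
      rcases this with ⟨k, hk⟩
      refine ⟨k, ?_⟩
      have hp0 : (p : ℤ) ≠ 0 := by exact_mod_cast hp.ne_zero
      have : (p : ℤ) ^ 2 * e ^ 2 = (p : ℤ) ^ 2 * ((p : ℤ) * k) := by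
        rw [hk]; ring
      exact mul_left_cancel₀ (pow_ne_zero 2 hp0) this
    exact hpprime.dvd_of_dvd_pow h5
  obtain ⟨f, hf⟩ := hpe
  have : (p : ℤ) * (p : ℤ) ∣ d := ⟨f, by rw [he, hf]; ring⟩
  exact hpprime.not_unit (hsq _ this)
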